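/- For points x = (s₁, p₁) and y = (s₂, p₂) in the symmetrised bidisc G and ω on the unit circle, the pseudohyperbolic distance satisfies ρ(Φ_ω(x), Φ_ω(y)) = |((s₂p₁ − s₁p₂)ω² + 2(p₂ − p₁)ω + s₁ − s₂) / ((s₁ − conj(s₂)p₁)ω² − 2(1 − p₁·conj(p₂))ω + conj(s₂) − s₁·conj(p₂))|. -/

import Mathlib

/-- The symmetrised bidisc. -/
def symBidisc : Set (ℂ × ℂ) :=
  {x | ∃ z w : ℂ, ‖z‖ < 1 ∧ ‖w‖ < 1 ∧ x = (z + w, z * w)}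

lemma symBidisc_s_lt_two {s p : ℂ} (h : (s, p) ∈ symBidisc) : ‖s‖ < 2 := by
  obtain ⟨z, w, hz, hw, he⟩ := h
  have : s = z + w := by simpa using congrArg Prod.fst he
  calc ‖s‖ = ‖z + w‖ := by rw [this]
    _ ≤ ‖z‖ + ‖w‖ := norm_add_le _ _
    _ < 2 := by linarith

lemma denom_ne_zero {s p ω : ℂ} (h : (s, p) ∈ symBidisc) (hω : ‖ω‖ = 1) :
    2 - ω * s ≠ 0 := by
  intro h0
  have h2 : (2 : ℂ) = ω * s := sub_eq_zero.mp h0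
  have hn : ‖(2 : ℂ)‖ = ‖ω * s‖ := by rw [← h2]
  rw [norm_mul, hω, one_mul] at hn
  have hs := symBidisc_s_lt_two h
  have h2n : ‖(2 : ℂ)‖ = 2 := by norm_num
  linarith

/-- Explicit formula for the pseudohyperbolic distance `ρ(Φ_ω x, Φ_ω y)` for
`x = (s₁,p₁), y = (s₂,p₂) ∈ G` and unimodular `ω`. -/
theorem stmt_14 (s₁ p₁ s₂ p₂ ω : ℂ)
    (hx : (s₁, p₁) ∈ symBidisc) (hy : (s₂, p₂) ∈ symBidisc) (hω : ‖ω‖ = 1) :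
    ‖(2 * ω * p₁ - s₁) / (2 - ω * s₁) - (2 * ω * p₂ - s₂) / (2 - ω * s₂)‖ /
      ‖1 - (starRingEnd ℂ) ((2 * ω * p₂ - s₂) / (2 - ω * s₂)) *
        ((2 * ω * p₁ - s₁) / (2 - ω * s₁))‖ =
    ‖((s₂ * p₁ - s₁ * p₂) * ω ^ 2 + 2 * (p₂ - p₁) * ω + s₁ - s₂) /
      ((s₁ - (starRingEnd ℂ) s₂ * p₁) * ω ^ 2 - 2 * (1 - p₁ * (starRingEnd ℂ) p₂) * ω +
        (starRingEnd ℂ) s₂ - s₁ * (starRingEnd ℂ) p₂)‖ := by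
  set A₁ := 2 * ω * p₁ - s₁ with hA₁
  set A₂ := 2 * ω * p₂ - s₂ with hA₂
  set B₁ := 2 - ω * s₁ with hB₁def
  set B₂ := 2 - ω * s₂ with hB₂def
  have hB₁ : B₁ ≠ 0 := denom_ne_zero hx hω
  have hB₂ : B₂ ≠ 0 := denom_ne_zero hy hω
  have hcB₂ : (starRingEnd ℂ) B₂ ≠ 0 := (map_ne_zero (starRingEnd ℂ)).mpr hB₂
  have hωc : ω * (starRingEnd ℂ) ω = 1 := by
    rw [Complex.mul_conj]
    norm_cast
    rw [Complex.normSq_eq_norm_sq]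
    simp [hω]
  set N := ((s₂ * p₁ - s₁ * p₂) * ω ^ 2 + 2 * (p₂ - p₁) * ω + s₁ - s₂) with hN
  set D := ((s₁ - (starRingEnd ℂ) s₂ * p₁) * ω ^ 2 - 2 * (1 - p₁ * (starRingEnd ℂ) p₂) * ω +
        (starRingEnd ℂ) s₂ - s₁ * (starRingEnd ℂ) p₂) with hD
  -- numerator
  have h1 : A₁ / B₁ - A₂ / B₂ = (-2 * N) / (B₁ * B₂) := by
    rw [div_sub_div _ _ hB₁ hB₂]
    congr 1
    rw [hA₁, hA₂, hB₁def, hB₂def, hN]; ring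
  -- denominator
  have h2 : 1 - (starRingEnd ℂ) (A₂ / B₂) * (A₁ / B₁) =
      ((starRingEnd ℂ) B₂ * B₁ - (starRingEnd ℂ) A₂ * A₁) / ((starRingEnd ℂ) B₂ * B₁) := by
    rw [map_div₀]
    field_simp
  have h3 : ω * ((starRingEnd ℂ) B₂ * B₁ - (starRingEnd ℂ) A₂ * A₁) = -2 * D := by
    rw [hA₁, hA₂, hB₁def, hB₂def, hD]
    simp only [map_sub, map_mul, map_ofNat, map_one]
    linear_combination (ω * s₁ * (starRingEnd ℂ) s₂ - 2 * (starRingEnd ℂ) s₂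
      - 4 * ω * p₁ * (starRingEnd ℂ) p₂ + 2 * s₁ * (starRingEnd ℂ) p₂) * hωc
  have hND : ‖(starRingEnd ℂ) B₂ * B₁ - (starRingEnd ℂ) A₂ * A₁‖ = 2 * ‖D‖ := by
    have : ‖ω * ((starRingEnd ℂ) B₂ * B₁ - (starRingEnd ℂ) A₂ * A₁)‖ = ‖(-2 : ℂ) * D‖ := by
      rw [h3]
    rw [norm_mul, hω, one_mul, norm_mul] at this
    simpa using this
  have hBB : ‖(starRingEnd ℂ) B₂ * B₁‖ = ‖B₁‖ * ‖B₂‖ := by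
    rw [norm_mul, RCLike.norm_conj, mul_comm]
  rw [h1, h2, norm_div, norm_div, norm_mul, norm_mul, hND, hBB]
  have hnum : ‖(-2 : ℂ)‖ * ‖N‖ = 2 * ‖N‖ := by norm_num
  rw [hnum, norm_div]
  have hc : ‖B₁‖ * ‖B₂‖ ≠ 0 :=
    mul_ne_zero (norm_ne_zero_iff.mpr hB₁) (norm_ne_zero_iff.mpr hB₂)
  rw [div_div_div_comm, div_self hc, div_one, mul_div_mul_left _ _ two_ne_zero]
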